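/- For every pullback-preserving functor A on a category of worlds, the assignment S(A) defined by S(A)w = A w and, for a pullback square ◇ = w (x,u; x',u') w' with apex w̄, S(A)◇(a,a') = A w̄(x.a, x'.a'), equipped with composition t_{S(A)}(p,p') = t_A(z.p, z'.p') along composed squares, is a fibred setoid: it admits reflexivity, symmetry and transitivity operations and satisfies the pullback-decomposition property. -/
import Mathlib


open CategoryTheory

universe v u

/-- A proof-relevant setoid: a carrier together with, for any two elements, a set of
proofs of equality, with reflexivity, symmetry and transitivity operations. -/
structure PSetoid : Type 1 where
  carrier : Type
  Eq : carrier → carrier → Type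
  refl : ∀ x, Eq x x
  symm : ∀ {x y}, Eq x y → Eq y x
  trans : ∀ {x y z}, Eq x y → Eq y z → Eq x z

/-- `x` and `y` are jointly epic. -/
def JointlyEpic {W : Type u} [Category.{v} W] {a b c : W} (x : a ⟶ c) (y : b ⟶ c) : Prop :=
  ∀ {d : W} (h k : c ⟶ d), x ≫ h = x ≫ k → y ≫ h = y ≫ k → h = k

/-- Every cospan can be completed to a pullback square. -/
def HasWorldPullbacks (W : Type u) [Category.{v} W] : Prop :=
  ∀ {a b c : W} (x : a ⟶ c) (y : b ⟶ c),
    ∃ (p : W) (u : p ⟶ a) (v : p ⟶ b), IsPullback u v x y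

/-- Every span can be completed to a minimal pullback square. -/
def SpansComplete (W : Type u) [Category.{v} W] : Prop :=
  ∀ {p a b : W} (u : p ⟶ a) (v : p ⟶ b),
    ∃ (c : W) (x : a ⟶ c) (y : b ⟶ c), IsPullback u v x y ∧ JointlyEpic x y

/-- All morphisms are monomorphisms. -/
def AllMono (W : Type u) [Category.{v} W] : Prop :=
  ∀ {a b : W} (f : a ⟶ b), Mono f

/-- A pullback-preserving, setoid-valued functor on a category of worlds. -/
structure PPF (W : Type u) [Category.{v} W] : Type (max u v 1) where
  obj : W → PSetoid
  map : ∀ {w w' : W}, (w ⟶ w') → (obj w).carrier → (obj w').carrier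
  mapEq : ∀ {w w' : W} (u : w ⟶ w') {a b : (obj w).carrier},
    (obj w).Eq a b → (obj w').Eq (map u a) (map u b)
  map_id : ∀ {w : W} (a : (obj w).carrier), map (𝟙 w) a = a
  map_comp : ∀ {w w' w'' : W} (u : w ⟶ w') (u' : w' ⟶ w'') (a : (obj w).carrier),
    map (u ≫ u') a = map u' (map u a)
  paste : ∀ {l w w' ap : W} {u : l ⟶ w} {u' : l ⟶ w'} {x : w ⟶ ap} {x' : w' ⟶ ap},
    IsPullback u u' x x' →
    ∀ (a : (obj w).carrier) (a' : (obj w').carrier),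
      (obj ap).Eq (map x a) (map x' a') →
      Σ' b : (obj l).carrier,
        PProd ((obj w).Eq (map u b) a) ((obj w').Eq (map u' b) a')

/-- A bundled pullback square from `w` to `w'`, with low point, apex, span legs
`u, u'` and cospan (apex) legs `x, x'`. -/
structure PBSq (W : Type u) [Category.{v} W] (w w' : W) : Type (max u v) where
  low : W
  apex : W
  u : low ⟶ w
  u' : low ⟶ w'
  x : w ⟶ apex
  x' : w' ⟶ apex
  is : IsPullback u u' x x'

/-- The symmetry operation on pullback squares. -/
def PBSq.symm {W : Type u} [Category.{v} W] {w w' : W} (sq : PBSq W w w') : PBSq W w' w :=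
  ⟨sq.low, sq.apex, sq.u', sq.u, sq.x', sq.x, sq.is.flip⟩

/-- The trivial pullback square `(u,1;1,u)` associated to a morphism `u`. -/
def PBSq.triv {W : Type u} [Category.{v} W] {l w : W} (u : l ⟶ w) : PBSq W l w :=
  ⟨l, w, 𝟙 l, u, u, 𝟙 w, IsPullback.id_horiz u⟩

/-- The identity (reflexivity) pullback square at a world `w`. -/
def PBSq.idSq {W : Type u} [Category.{v} W] (w : W) : PBSq W w w :=
  PBSq.triv (𝟙 w)

/-- Two pullback squares between the same worlds are isomorphic when there is an
isomorphism of low points commuting with the span legs. -/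
def PBSqIso {W : Type u} [Category.{v} W] {w w' : W} (s1 s2 : PBSq W w w') : Prop :=
  ∃ f : s1.low ≅ s2.low, f.hom ≫ s2.u = s1.u ∧ f.hom ≫ s2.u' = s1.u'

/-- The proof sets of the fibred setoid `S(A)` induced by a pullback-preserving
functor `A`: proofs over a square are equality proofs at its apex. -/
def SPf {W : Type u} [Category.{v} W] (A : PPF W) {w w' : W} (sq : PBSq W w w')
    (a : (A.obj w).carrier) (a' : (A.obj w').carrier) : Type :=
  (A.obj sq.apex).Eq (A.map sq.x a) (A.map sq.x' a')

/-- For every pullback-preserving functor `A` on a category of worlds, `S(A)` is a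
fibred setoid: it admits reflexivity, symmetry, and transitivity operations (the
latter producing a proof over some composite square), transport along isomorphic
pullback squares, and the pullback-decomposition property. -/
theorem stmt_7 {W : Type u} [Category.{v} W]
    (hpb : HasWorldPullbacks W) (hspan : SpansComplete W) (hmono : AllMono W)
    (A : PPF W) :
    Nonempty (∀ (w : W) (a : (A.obj w).carrier), SPf A (PBSq.idSq w) a a) ∧
    Nonempty (∀ (w w' : W) (sq : PBSq W w w') (a : (A.obj w).carrier)
      (a' : (A.obj w').carrier), SPf A sq a a' → SPf A sq.symm a' a) ∧
    Nonempty (∀ (w w' w'' : W) (sq1 : PBSq W w w') (sq2 : PBSq W w' w'')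
      (a : (A.obj w).carrier) (a' : (A.obj w').carrier) (a'' : (A.obj w'').carrier),
      SPf A sq1 a a' → SPf A sq2 a' a'' → Σ' sq : PBSq W w w'', SPf A sq a a'') ∧
    Nonempty (∀ (w w' : W) (sq1 sq2 : PBSq W w w'), PBSqIso sq1 sq2 →
      ∀ (a : (A.obj w).carrier) (a' : (A.obj w').carrier),
        SPf A sq1 a a' → SPf A sq2 a a') ∧
    Nonempty (∀ (w w' : W) (sq : PBSq W w w') (a : (A.obj w).carrier)
      (a' : (A.obj w').carrier), SPf A sq a a' →
      Σ' b : (A.obj sq.low).carrier,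
        PProd (SPf A (PBSq.triv sq.u) b a) (SPf A (PBSq.triv sq.u') b a')) := by
  refine ⟨⟨?_⟩, ⟨?_⟩, ⟨?_⟩, ⟨?_⟩, ⟨?_⟩⟩
  · -- reflexivity
    intro w a
    exact (A.obj w).refl _
  · -- symmetry
    intro w w' sq a a' p
    exact (A.obj sq.apex).symm p
  · -- transitivity
    intro w w' w'' sq1 sq2 a a' a'' p q
    have hs := hspan sq1.x' sq2.x
    have hs1 := hs.choose_spec
    have hs2 := hs1.choose_spec
    set c := hs.choose
    set z := hs1.choose
    set z' := hs2.choose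
    have hzz : IsPullback sq1.x' sq2.x z z' := hs2.choose_spec.1
    have hp := hpb sq1.u' sq2.u
    have hp1 := hp.choose_spec
    have hp2 := hp1.choose_spec
    set L := hp.choose
    set f := hp1.choose
    set g := hp2.choose
    have hfg : IsPullback f g sq1.u' sq2.u := hp2.choose_spec
    have left : IsPullback g (f ≫ sq1.u) (sq2.u ≫ sq1.x') sq1.x :=
      IsPullback.paste_vert hfg.flip sq1.is.flip
    have right : IsPullback sq2.u' (sq2.u ≫ sq1.x') (sq2.x' ≫ z') z :=
      IsPullback.paste_vert sq2.is.flip hzz.flip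
    have big : IsPullback (f ≫ sq1.u) (g ≫ sq2.u') (sq1.x ≫ z) (sq2.x' ≫ z') :=
      (IsPullback.paste_horiz left right).flip
    refine ⟨⟨L, c, f ≫ sq1.u, g ≫ sq2.u', sq1.x ≫ z, sq2.x' ≫ z', big⟩, ?_⟩
    show (A.obj c).Eq (A.map (sq1.x ≫ z) a) (A.map (sq2.x' ≫ z') a'')
    rw [A.map_comp, A.map_comp]
    have h1 : (A.obj c).Eq (A.map z (A.map sq1.x a)) (A.map z (A.map sq1.x' a')) :=
      A.mapEq z p
    have h2 : A.map z (A.map sq1.x' a') = A.map z' (A.map sq2.x a') := by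
      rw [← A.map_comp, ← A.map_comp, hzz.w]
    have h3 : (A.obj c).Eq (A.map z' (A.map sq2.x a')) (A.map z' (A.map sq2.x' a'')) :=
      A.mapEq z' q
    exact (A.obj c).trans h1 (h2 ▸ h3)
  · -- transport along isomorphisms of squares
    intro w w' sq1 sq2 hiso a a' p
    set φ : sq1.low ≅ sq2.low := hiso.choose with hφ
    have hu : φ.hom ≫ sq2.u = sq1.u := hiso.choose_spec.1
    have hu' : φ.hom ≫ sq2.u' = sq1.u' := hiso.choose_spec.2
    obtain ⟨b, hb, hb'⟩ := A.paste sq1.is a a' p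
    have e1 : (A.obj w).Eq (A.map sq2.u (A.map φ.hom b)) a := by
      rw [← A.map_comp, hu]; exact hb
    have e2 : (A.obj w').Eq (A.map sq2.u' (A.map φ.hom b)) a' := by
      rw [← A.map_comp, hu']; exact hb'
    have h1 : (A.obj sq2.apex).Eq (A.map sq2.x a)
        (A.map sq2.x (A.map sq2.u (A.map φ.hom b))) :=
      A.mapEq sq2.x ((A.obj w).symm e1)
    have hmid : A.map sq2.x (A.map sq2.u (A.map φ.hom b))
        = A.map sq2.x' (A.map sq2.u' (A.map φ.hom b)) := by
      rw [← A.map_comp sq2.u sq2.x, ← A.map_comp sq2.u' sq2.x', sq2.is.w]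
    have h2 : (A.obj sq2.apex).Eq (A.map sq2.x' (A.map sq2.u' (A.map φ.hom b)))
        (A.map sq2.x' a') :=
      A.mapEq sq2.x' e2
    exact (A.obj sq2.apex).trans h1 (hmid ▸ h2)
  · -- decomposition
    intro w w' sq a a' p
    obtain ⟨b, hb, hb'⟩ := A.paste sq.is a a' p
    refine ⟨b, ⟨?_, ?_⟩⟩
    · show (A.obj w).Eq (A.map sq.u b) (A.map (𝟙 w) a)
      rw [A.map_id]; exact hb
    · show (A.obj w').Eq (A.map sq.u' b) (A.map (𝟙 w') a')
      rw [A.map_id]; exact hb'
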